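/- Let E be a real inner product space, let C be a natural number, and for each c ∈ Fin C let g c : E → ℝ be a convex function with HasGradientAt (g c) (j c) ỹ and g c ỹ = 0. Let λ : Fin C → ℝ satisfy λ c ≥ 0 for all c, and suppose the base forecast is ŷ = ỹ + ∑ c, λ c • j c with ŷ ≠ ỹ. Then for every y ∈ E satisfying g c y = 0 for all c ∈ Fin C, dist ỹ y < dist ŷ y. -/

import Mathlib

open RealInnerProductSpace

lemma grad_ineq {E : Type*} [NormedAddCommGroup E] [InnerProductSpace ℝ E] [CompleteSpace E]
    {g : E → ℝ} (hg : ConvexOn ℝ Set.univ g) {j x : E}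
    (hgrad : HasGradientAt g j x) (y : E) :
    g x + ⟪j, y - x⟫ ≤ g y := by
  set h : ℝ → ℝ := fun t => g (x + t • (y - x)) with hh
  have hkey : ∀ t : ℝ, (AffineMap.lineMap x y t : E) = x + t • (y - x) := by
    intro t
    simp [AffineMap.lineMap_apply_module]
    module
  have hconv : ConvexOn ℝ Set.univ h := by
    have := hg.comp_affineMap (AffineMap.lineMap x y)
    have heq : (g ∘ ⇑(AffineMap.lineMap x y)) = h := by
      funext t; simp [Function.comp, hkey t, hh]
    rw [heq] at this
    simpa [Set.preimage_univ] using this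
  have hline : HasDerivAt (fun t : ℝ => x + t • (y - x)) (y - x) 0 := by
    have h1 : HasDerivAt (fun t : ℝ => t • (y - x)) ((1:ℝ) • (y - x)) 0 :=
      (hasDerivAt_id (0:ℝ)).smul_const (y - x)
    simpa using h1.const_add x
  have hd : HasDerivAt h (⟪j, y - x⟫) 0 := by
    have hF := hgrad.hasFDerivAt
    have hx0 : x + (0:ℝ) • (y - x) = x := by simp
    rw [← hx0] at hF
    have comp := hF.comp_hasDerivAt (f := fun t : ℝ => x + t • (y - x)) 0 hline
    simp at comp
    exact comp
  have hslope := hconv.le_slope_of_hasDerivAt (Set.mem_univ (0:ℝ)) (Set.mem_univ (1:ℝ)) one_pos hd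
  have hs : slope h 0 1 = g y - g x := by
    simp [slope_def_field, hh]
  rw [hs] at hslope
  linarith


/-- Theorem 2: with multiple convex constraints and a base forecast
`yhat = ytil + ∑ c, λ c • j c` with nonnegative Lagrange multipliers (i.e. lying in
the intersection of the strict hypographs), reconciliation strictly improves
forecast accuracy for every coherent realisation. -/
theorem reconciliation_improves_multiple_convex_constraints
    {E : Type*} [NormedAddCommGroup E] [InnerProductSpace ℝ E] [CompleteSpace E]
    (C : ℕ) (g : Fin C → E → ℝ) (hg : ∀ c, ConvexOn ℝ Set.univ (g c))
    (ytil : E) (j : Fin C → E)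
    (hgrad : ∀ c, HasGradientAt (g c) (j c) ytil) (h0 : ∀ c, g c ytil = 0)
    (lam : Fin C → ℝ) (hlam : ∀ c, 0 ≤ lam c)
    (yhat : E) (hyhat : yhat = ytil + ∑ c, lam c • j c) (hne : yhat ≠ ytil) :
    ∀ y : E, (∀ c, g c y = 0) → dist ytil y < dist yhat y := by
  intro y hy
  set d : E := ∑ c, lam c • j c with hd
  have hdne : d ≠ 0 := by
    intro h; apply hne; rw [hyhat, h, add_zero]
  -- inner product nonnegativity
  have hinner : 0 ≤ ⟪d, ytil - y⟫ := by
    rw [hd, sum_inner]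
    apply Finset.sum_nonneg
    intro c _
    rw [real_inner_smul_left]
    have h1 := grad_ineq (hg c) (hgrad c) y
    rw [h0 c, hy c] at h1
    have h2 : ⟪j c, y - ytil⟫ ≤ 0 := by linarith
    have h3 : 0 ≤ ⟪j c, ytil - y⟫ := by
      rw [show ytil - y = -(y - ytil) from (neg_sub y ytil).symm, inner_neg_right]; linarith
    exact mul_nonneg (hlam c) h3
  have hexp : ‖yhat - y‖ ^ 2 = ‖ytil - y‖ ^ 2 + 2 * ⟪d, ytil - y⟫ + ‖d‖ ^ 2 := by
    have : yhat - y = (ytil - y) + d := by rw [hyhat]; abel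
    rw [this, norm_add_sq_real, real_inner_comm d (ytil - y)]
  have hlt : ‖ytil - y‖ ^ 2 < ‖yhat - y‖ ^ 2 := by
    have hdpos : 0 < ‖d‖ ^ 2 := pow_pos (norm_pos_iff.mpr hdne) 2
    nlinarith
  rw [dist_eq_norm, dist_eq_norm]
  exact lt_of_pow_lt_pow_left₀ 2 (norm_nonneg _) hlt
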